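/- Let B₁ = [[1, M],[0, λ]] and B₂ = [[λ, M],[0, 1]] with 0 < λ < 1 and M > 0. Then for every n ≥ 1 and every choice j₁,...,j_n ∈ {1, 2} containing exactly m instances of 1, the operator norm ‖B_{j_n}···B_{j_1}‖ is at most ‖B₁^m B₂^{n−m}‖. -/

import Mathlib

noncomputable def opNormR (A : Matrix (Fin 2) (Fin 2) ℝ) : ℝ :=
  ‖LinearMap.toContinuousLinearMap (Matrix.toEuclideanLin A)‖

/-- Product B_{σ(n)} ⋯ B_{σ(1)} of real 2×2 matrices. -/
noncomputable def prodWR {N : ℕ} (B : Fin N → Matrix (Fin 2) (Fin 2) ℝ) (σ : ℕ → Fin N) :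
    ℕ → Matrix (Fin 2) (Fin 2) ℝ
  | 0 => 1
  | n + 1 => B (σ (n + 1)) * prodWR B σ n

/-- geometric partial sum -/
noncomputable def geomS (lam : ℝ) (k : ℕ) : ℝ := ∑ t ∈ Finset.range k, lam ^ t

lemma geomS_succ (lam : ℝ) (k : ℕ) : geomS lam (k + 1) = geomS lam k + lam ^ k := by
  simp [geomS, Finset.sum_range_succ]

lemma geomS_nonneg {lam : ℝ} (hlam : 0 ≤ lam) (k : ℕ) : 0 ≤ geomS lam k :=
  Finset.sum_nonneg fun _ _ => pow_nonneg hlam _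

lemma geomS_mul (lam : ℝ) (k : ℕ) : lam * geomS lam k = geomS lam (k + 1) - 1 := by
  simp [geomS, Finset.mul_sum, Finset.sum_range_succ', ← pow_succ']

/-- operator-norm monotonicity in the (nonnegative) upper-right entry -/
lemma opNorm_upper_mono (a b b' d : ℝ) (ha : 0 ≤ a) (hb : 0 ≤ b) (hbb : b ≤ b') :
    opNormR !![a, b; 0, d] ≤ opNormR !![a, b'; 0, d] := by
  have hb' : 0 ≤ b' := hb.trans hbb
  unfold opNormR
  refine ContinuousLinearMap.opNorm_le_bound _ (norm_nonneg _) (fun x => ?_)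
  set f' := LinearMap.toContinuousLinearMap (Matrix.toEuclideanLin !![a, b'; 0, d]) with hf'
  set x' : EuclideanSpace ℝ (Fin 2) := (WithLp.equiv 2 (Fin 2 → ℝ)).symm ![|x 0|, |x 1|] with hx'def
  have hx' : ‖x'‖ = ‖x‖ := by
    rw [EuclideanSpace.norm_eq, EuclideanSpace.norm_eq]
    congr 1
    simp [hx'def, Fin.sum_univ_two, WithLp.equiv_symm_apply, WithLp.ofLp_toLp]
  have key : ‖(LinearMap.toContinuousLinearMap
        (Matrix.toEuclideanLin !![a, b; 0, d])) x‖ ≤ ‖f' x'‖ := by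
    rw [LinearMap.coe_toContinuousLinearMap', hf', LinearMap.coe_toContinuousLinearMap',
      Matrix.toEuclideanLin_apply, Matrix.toEuclideanLin_apply,
      EuclideanSpace.norm_eq, EuclideanSpace.norm_eq]
    apply Real.sqrt_le_sqrt
    simp only [WithLp.equiv_symm_apply, WithLp.ofLp_toLp, Equiv.apply_symm_apply, Matrix.mulVec,
      dotProduct, Fin.sum_univ_two, Real.norm_eq_abs, hx'def,
      Matrix.cons_val', Matrix.cons_val_zero, Matrix.cons_val_one, Matrix.head_cons,
      Matrix.empty_val', Matrix.cons_val_fin_one, Matrix.head_fin_const, sq_abs,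
      Matrix.of_apply]
    have h0 : |a * x 0 + b * x 1| ≤ a * |x 0| + b' * |x 1| := by
      calc |a * x 0 + b * x 1| ≤ |a * x 0| + |b * x 1| := abs_add_le _ _
        _ = a * |x 0| + b * |x 1| := by rw [abs_mul, abs_mul, abs_of_nonneg ha, abs_of_nonneg hb]
        _ ≤ a * |x 0| + b' * |x 1| := by nlinarith [abs_nonneg (x 1)]
    have h0' : (a * x 0 + b * x 1) ^ 2 ≤ (a * |x 0| + b' * |x 1|) ^ 2 := by
      have h2 := abs_nonneg (a * x 0 + b * x 1)
      nlinarith [sq_abs (a * x 0 + b * x 1)]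
    have hd : (0 * x 0 + d * x 1) ^ 2 = (0 * |x 0| + d * |x 1|) ^ 2 := by
      rw [zero_mul, zero_mul, zero_add, zero_add, mul_pow, mul_pow, sq_abs]
    have hevx : ∀ i : Fin 2, (WithLp.equiv 2 (Fin 2 → ℝ)) x i = x i := fun _ => rfl
    linarith [hd.le, hd.ge]
  calc ‖(LinearMap.toContinuousLinearMap (Matrix.toEuclideanLin !![a, b; 0, d])) x‖
      ≤ ‖f' x'‖ := key
    _ ≤ ‖f'‖ * ‖x'‖ := f'.le_opNorm x'
    _ = ‖f'‖ * ‖x‖ := by rw [hx']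

lemma pow_B0 (M lam : ℝ) (m : ℕ) :
    (!![(1 : ℝ), M; 0, lam]) ^ m = !![1, M * geomS lam m; 0, lam ^ m] := by
  induction m with
  | zero => simp [geomS, Matrix.one_fin_two]
  | succ m ih =>
    rw [pow_succ', ih, geomS_succ]
    ext i j
    fin_cases i <;> fin_cases j <;>
      simp [Matrix.mul_fin_two, pow_succ] <;> ring
lemma pow_B1 (M lam : ℝ) (p : ℕ) :
    (!![lam, M; 0, (1 : ℝ)]) ^ p = !![lam ^ p, M * geomS lam p; 0, 1] := by
  induction p with
  | zero => simp [geomS, Matrix.one_fin_two]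
  | succ p ih =>
    rw [pow_succ', ih]
    have e : M * geomS lam (p + 1) = lam * (M * geomS lam p) + M * 1 := by
      linear_combination (-M) * geomS_mul lam p
    ext i j
    fin_cases i <;> fin_cases j <;>
      simp [Matrix.mul_fin_two, pow_succ, e] <;> ring

/-- among products of B₁, B₂ with exactly m factors B₁ and n − m
factors B₂, the ordered product B₁^m B₂^(n−m) has maximal Euclidean operator norm. -/
theorem stmt8 (M lam : ℝ) (hlam : 0 < lam) (hlam1 : lam < 1) (hM : 0 < M)
    (B : Fin 2 → Matrix (Fin 2) (Fin 2) ℝ)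
    (hB0 : B 0 = !![(1 : ℝ), M; 0, lam]) (hB1 : B 1 = !![lam, M; 0, 1])
    (n : ℕ) (hn : 1 ≤ n) (σ : ℕ → Fin 2)
    (m : ℕ) (hm : m = ((Finset.Icc 1 n).filter (fun k => σ k = 0)).card) :
    opNormR (prodWR B σ n) ≤ opNormR (B 0 ^ m * B 1 ^ (n - m)) := by
  classical
  -- counting functions
  set cm : ℕ → ℕ := fun n => ((Finset.Icc 1 n).filter (fun k => σ k = 0)).card with hcm
  set cp : ℕ → ℕ := fun n => ((Finset.Icc 1 n).filter (fun k => ¬ σ k = 0)).card with hcp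
  have hsum : ∀ n, cm n + cp n = n := by
    intro n
    have := Finset.card_filter_add_card_filter_not
      (s := Finset.Icc 1 n) (p := fun k => σ k = 0)
    simpa [hcm, hcp, Nat.card_Icc] using this
  -- structure of the word product
  have struct : ∀ k, ∃ c : ℝ, prodWR B σ k = !![lam ^ (cp k), c; 0, lam ^ (cm k)] ∧
      0 ≤ c ∧ c ≤ M * (geomS lam (cp k) + geomS lam (cm k)) := by
    intro k
    induction k with
    | zero =>
      refine ⟨0, ?_, le_refl 0, ?_⟩
      · simp [prodWR, hcm, hcp, Matrix.one_fin_two]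
      · exact mul_nonneg hM.le
          (add_nonneg (geomS_nonneg hlam.le _) (geomS_nonneg hlam.le _))
    | succ k ih =>
      obtain ⟨c, hW, hc0, hc⟩ := ih
      have hins : Finset.Icc 1 (k + 1) = insert (k + 1) (Finset.Icc 1 k) :=
        (Finset.insert_Icc_right_eq_Icc_add_one (Nat.le_add_left 1 k)).symm
      have hnotmem : k + 1 ∉ Finset.Icc 1 k := by simp
      have hSm : 0 ≤ geomS lam (cm k) := geomS_nonneg hlam.le _
      have hSp : 0 ≤ geomS lam (cp k) := geomS_nonneg hlam.le _
      have hlampow : lam ^ (cm k) ≤ 1 := pow_le_one₀ hlam.le hlam1.le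
      by_cases h : σ (k + 1) = 0
      · -- new factor is B 0
        have hcm1 : cm (k + 1) = cm k + 1 := by
          simp only [hcm]
          rw [hins, Finset.filter_insert, if_pos h,
            Finset.card_insert_of_notMem (fun hx => hnotmem (Finset.mem_filter.mp hx).1)]
        have hcp1 : cp (k + 1) = cp k := by
          simp only [hcp]
          rw [hins, Finset.filter_insert, if_neg (not_not_intro h)]
        refine ⟨c + M * lam ^ (cm k), ?_, ?_, ?_⟩
        · show B (σ (k + 1)) * prodWR B σ k = _
          rw [h, hB0, hW, hcm1, hcp1]
          ext i j
          fin_cases i <;> fin_cases j <;>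
            simp [Matrix.mul_fin_two, pow_succ] <;> ring
        · positivity
        · rw [hcm1, hcp1, geomS_succ]
          nlinarith
      · -- new factor is B 1
        have h1 : σ (k + 1) = 1 := Fin.eq_one_of_ne_zero _ h
        have hcm1 : cm (k + 1) = cm k := by
          simp only [hcm]
          rw [hins, Finset.filter_insert, if_neg h]
        have hcp1 : cp (k + 1) = cp k + 1 := by
          simp only [hcp]
          rw [hins, Finset.filter_insert, if_pos h,
            Finset.card_insert_of_notMem (fun hx => hnotmem (Finset.mem_filter.mp hx).1)]
        refine ⟨lam * c + M * lam ^ (cm k), ?_, ?_, ?_⟩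
        · show B (σ (k + 1)) * prodWR B σ k = _
          rw [h1, hB1, hW, hcm1, hcp1]
          ext i j
          fin_cases i <;> fin_cases j <;>
            simp [Matrix.mul_fin_two, pow_succ] <;> ring
        · positivity
        · rw [hcm1, hcp1]
          have e1 : lam * geomS lam (cp k) = geomS lam (cp k + 1) - 1 := geomS_mul _ _
          have e2 : lam * geomS lam (cm k) = geomS lam (cm k) + lam ^ (cm k) - 1 := by
            rw [geomS_mul, geomS_succ]
          nlinarith
  -- finish
  obtain ⟨c, hW, hc0, hc⟩ := struct n
  have hmn : m = cm n := hm
  have hpn : n - m = cp n := by have := hsum n; omega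
  have hR : B 0 ^ m * B 1 ^ (n - m) =
      !![lam ^ (cp n), M * (geomS lam (cp n) + geomS lam (cm n)); 0, lam ^ (cm n)] := by
    rw [hB0, hB1, pow_B0, pow_B1, hpn, hmn]
    ext i j
    fin_cases i <;> fin_cases j <;> simp [Matrix.mul_fin_two] <;> ring
  rw [hW, hR]
  exact opNorm_upper_mono (lam ^ cp n) c (M * (geomS lam (cp n) + geomS lam (cm n)))
    (lam ^ cm n) (pow_nonneg hlam.le _) hc0 hc
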